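/- Let dom t_α := {f ∈ L²(r_−) : f_e ∈ L²(η_α), f_o ∈ L²(ω_α)} where f_e, f_o are the even and odd parts of f. Then dom t_α with the inner product t_α(f,g) := 2(f_o,g_o)_{ω_α} + (f,g)_{η_α} is a Hilbert space (complete inner product space). -/

import Mathlib

open MeasureTheory Filter

/-- `η_α(x) := (√(|x|^α+1) − √(|x|^α))·|r(x)|`. -/
noncomputable def eta (α : ℝ) (r : ℝ → ℝ) (x : ℝ) : ℝ :=
  (Real.sqrt (|x| ^ α + 1) - Real.sqrt (|x| ^ α)) * |r x|

/-- `ω_α(x) := √(|x|^α)·|r(x)|`. -/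
noncomputable def omegaW (α : ℝ) (r : ℝ → ℝ) (x : ℝ) : ℝ :=
  Real.sqrt (|x| ^ α) * |r x|

/-- `r₊(x) := x·r(x)`. -/
def rplus (r : ℝ → ℝ) (x : ℝ) : ℝ := x * r x

/-- `r₋(x) := r(x)/x` (with junk value `0` at `x = 0`, where `r` vanishes anyway). -/
noncomputable def rminus (r : ℝ → ℝ) (x : ℝ) : ℝ := r x / x

/-- Membership in the weighted space `L²(w)`. -/
def MemL2W (w : ℝ → ℝ) (f : ℝ → ℂ) : Prop :=
  Integrable (fun x => ‖f x‖ ^ 2 * w x)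

/-- Even part of a function. -/
noncomputable def evenPart (f : ℝ → ℂ) (x : ℝ) : ℂ := (f x + f (-x)) / 2

/-- Odd part of a function. -/
noncomputable def oddPart (f : ℝ → ℂ) (x : ℝ) : ℂ := (f x - f (-x)) / 2

/-- `dom t_α = {f ∈ L²(r₋) : f_e ∈ L²(η_α), f_o ∈ L²(ω_α)}`. -/
noncomputable def DomT (α : ℝ) (r : ℝ → ℝ) (f : ℝ → ℂ) : Prop :=
  MemL2W (rminus r) f ∧ MemL2W (eta α r) (evenPart f) ∧ MemL2W (omegaW α r) (oddPart f)

/-- The squared norm `t_α(f,f) = 2‖f_o‖²_{ω_α} + ‖f‖²_{η_α}`. -/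
noncomputable def Qform (α : ℝ) (r : ℝ → ℝ) (f : ℝ → ℂ) : ℝ :=
  2 * (∫ x, ‖oddPart f x‖ ^ 2 * omegaW α r x) + ∫ x, ‖f x‖ ^ 2 * eta α r x

/-- The sesquilinear form `t_α(f,g) = 2(f_o,g_o)_{ω_α} + (f,g)_{η_α}`. -/
noncomputable def tForm (α : ℝ) (r : ℝ → ℝ) (f g : ℝ → ℂ) : ℂ :=
  2 * (∫ x, oddPart f x * (starRingEnd ℂ) (oddPart g x) * ((omegaW α r x : ℝ) : ℂ)) +
    ∫ x, f x * (starRingEnd ℂ) (g x) * ((eta α r x : ℝ) : ℂ)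

lemma lp2_norm_sq {μ : Measure ℝ} (v : Lp ℂ 2 μ) : ‖v‖ ^ 2 = ∫ x, ‖v x‖ ^ 2 ∂μ := by
  have h1 : (‖v‖:ℝ) ^ 2 = RCLike.re (K := ℂ) (inner (𝕜 := ℂ) v v) :=
    (inner_self_eq_norm_sq (𝕜 := ℂ) v).symm
  rw [h1, L2.inner_def]
  have h2 : (fun x => (inner (𝕜 := ℂ) (v x) (v x) : ℂ))
      = fun x => (RCLike.ofReal (K := ℂ) (‖v x‖^2)) := by
    funext x
    simp [RCLike.inner_apply, RCLike.conj_mul]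
  rw [h2, integral_ofReal (𝕜 := ℂ), RCLike.ofReal_re]

lemma norm_mul_sqrt_sq (z : ℂ) (t : ℝ) (ht : 0 ≤ t) :
    ‖z * ((Real.sqrt t : ℝ) : ℂ)‖ ^ 2 = ‖z‖ ^ 2 * t := by
  rw [norm_mul, mul_pow, Complex.norm_real, Real.norm_eq_abs,
    abs_of_nonneg (Real.sqrt_nonneg _), Real.sq_sqrt ht]

lemma sqrt_add_one_le (t : ℝ) (ht : 0 ≤ t) : Real.sqrt (t+1) ≤ Real.sqrt t + 1 := by
  have h := Real.sqrt_le_sqrt (show t + 1 ≤ (Real.sqrt t + 1)^2 by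
    nlinarith [Real.sq_sqrt ht, Real.sqrt_nonneg t])
  rwa [Real.sqrt_sq (by positivity)] at h

lemma sqrt_sub_mul_add (t : ℝ) (ht : 0 ≤ t) :
    (Real.sqrt (t+1) - Real.sqrt t) * (Real.sqrt (t+1) + Real.sqrt t) = 1 := by
  have h1 := Real.sq_sqrt ht
  have h2 := Real.sq_sqrt (show (0:ℝ) ≤ t + 1 by linarith)
  nlinarith [h1, h2]

lemma sq_norm_le_parts (f : ℝ → ℂ) (x : ℝ) :
    ‖f x‖^2 ≤ 2*‖evenPart f x‖^2 + 2*‖oddPart f x‖^2 := by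
  have h : f x = evenPart f x + oddPart f x := by unfold evenPart oddPart; ring
  calc ‖f x‖^2 = ‖evenPart f x + oddPart f x‖^2 := by rw [← h]
    _ ≤ (‖evenPart f x‖ + ‖oddPart f x‖)^2 := by
        have := norm_add_le (evenPart f x) (oddPart f x)
        nlinarith [norm_nonneg (evenPart f x + oddPart f x), norm_nonneg (evenPart f x),
          norm_nonneg (oddPart f x)]
    _ ≤ 2*‖evenPart f x‖^2 + 2*‖oddPart f x‖^2 := by
        nlinarith [sq_nonneg (‖evenPart f x‖ - ‖oddPart f x‖)]

set_option maxHeartbeats 1000000 in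
/-- `(dom t_α, t_α(·,·))` is a Hilbert space: `t_α(·,·)` is a (hermitian, positive definite)
inner product on `dom t_α` and the space is complete. -/
theorem domT_hilbert (α ε : ℝ) (hα : α ∈ Set.Icc (0 : ℝ) 2) (hε : 0 < ε)
    (r : ℝ → ℝ) (hrm : Measurable r) (hr0 : ∀ x, |x| ≤ ε → r x = 0)
    (hrpos : ∀ᵐ x ∂(volume : Measure ℝ), ε < |x| → 0 < x * r x)
    (hrodd : ∀ x, r (-x) = -r x) :
    -- hermitian symmetry and the relation to the quadratic form `Qform`
    (∀ f g : ℝ → ℂ, Measurable f → Measurable g → DomT α r f → DomT α r g →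
      (starRingEnd ℂ) (tForm α r g f) = tForm α r f g) ∧
    (∀ f : ℝ → ℂ, Measurable f → DomT α r f →
      tForm α r f f = ((Qform α r f : ℝ) : ℂ) ∧ 0 ≤ Qform α r f) ∧
    -- definiteness (as elements of the weighted space: `f` vanishes a.e. where `r ≠ 0`)
    (∀ f : ℝ → ℂ, Measurable f → DomT α r f → Qform α r f = 0 →
      ∀ᵐ x ∂(volume : Measure ℝ), r x ≠ 0 → f x = 0) ∧
    -- completeness: every `t_α`-Cauchy sequence in `dom t_α` converges in `dom t_α`
    (∀ F : ℕ → ℝ → ℂ, (∀ n, Measurable (F n) ∧ DomT α r (F n)) →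
      (∀ δ > 0, ∃ N, ∀ m ≥ N, ∀ n ≥ N, Qform α r (fun x => F m x - F n x) < δ) →
      ∃ f : ℝ → ℂ, Measurable f ∧ DomT α r f ∧
        Tendsto (fun n => Qform α r (fun x => F n x - f x)) atTop (nhds 0)) := by
  obtain ⟨hα0, hα2⟩ := hα
  have habs : ∀ x : ℝ, (0:ℝ) ≤ |x| ^ α := fun x => Real.rpow_nonneg (abs_nonneg x) α
  have hfac_pos : ∀ x : ℝ, 0 < Real.sqrt (|x|^α + 1) - Real.sqrt (|x|^α) := fun x => by
    have := Real.sqrt_lt_sqrt (habs x) (show |x|^α < |x|^α + 1 by linarith); linarith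
  have hηnn : ∀ x, 0 ≤ eta α r x := fun x => mul_nonneg (hfac_pos x).le (abs_nonneg _)
  have hωnn : ∀ x, 0 ≤ omegaW α r x := fun x => mul_nonneg (Real.sqrt_nonneg _) (abs_nonneg _)
  have hεx : ∀ x : ℝ, r x ≠ 0 → ε < |x| := fun x hx => lt_of_not_ge fun h => hx (hr0 x h)
  have hη0 : ∀ x, eta α r x = 0 ↔ r x = 0 := fun x => by
    unfold eta
    constructor
    · intro h
      rcases mul_eq_zero.mp h with h | h
      · exact absurd h (ne_of_gt (hfac_pos x))
      · exact abs_eq_zero.mp h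
    · intro h; rw [h]; simp
  have hηpos : ∀ x, r x ≠ 0 → 0 < eta α r x := fun x hx =>
    lt_of_le_of_ne (hηnn x) fun h => hx ((hη0 x).mp h.symm)
  have hωpos : ∀ x, r x ≠ 0 → 0 < omegaW α r x := fun x hx => by
    have h1 : 0 < |x| := lt_trans hε (hεx x hx)
    exact mul_pos (Real.sqrt_pos.mpr (Real.rpow_pos_of_pos h1 α)) (abs_pos.mpr hx)
  have hηm : Measurable (eta α r) := by unfold eta; fun_prop
  have hωm : Measurable (omegaW α r) := by unfold omegaW; fun_prop
  have hηeven : ∀ x, eta α r (-x) = eta α r x := fun x => by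
    unfold eta; rw [abs_neg, hrodd, abs_neg]
  have hωeven : ∀ x, omegaW α r (-x) = omegaW α r x := fun x => by
    unfold omegaW; rw [abs_neg, hrodd, abs_neg]
  have hεα : 0 < Real.sqrt (ε ^ α) := Real.sqrt_pos.mpr (Real.rpow_pos_of_pos hε α)
  -- η ≤ C₀ ω
  have hC0 : ∀ x, eta α r x ≤ (Real.sqrt (ε^α))⁻¹ * omegaW α r x := fun x => by
    by_cases hx : r x = 0
    · rw [(hη0 x).mpr hx]
      unfold omegaW; rw [hx]; simp
    · have h2 : Real.sqrt (ε^α) ≤ Real.sqrt (|x|^α) :=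
        Real.sqrt_le_sqrt (Real.rpow_le_rpow hε.le (hεx x hx).le hα0)
      have h3 : eta α r x ≤ |r x| := by
        unfold eta
        have h4 := sqrt_add_one_le (|x|^α) (habs x)
        nlinarith [abs_nonneg (r x), Real.sqrt_nonneg (|x|^α)]
      have h5 : (Real.sqrt (ε^α))⁻¹ * Real.sqrt (ε^α) = 1 := inv_mul_cancel₀ (ne_of_gt hεα)
      unfold omegaW
      calc eta α r x ≤ |r x| := h3
        _ = ((Real.sqrt (ε^α))⁻¹ * Real.sqrt (ε^α)) * |r x| := by rw [h5, one_mul]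
        _ ≤ (Real.sqrt (ε^α))⁻¹ * (Real.sqrt (|x|^α) * |r x|) := by
            rw [mul_assoc]
            exact mul_le_mul_of_nonneg_left
              (mul_le_mul_of_nonneg_right h2 (abs_nonneg _)) (inv_nonneg.mpr hεα.le)
  -- |r|/|x| ≤ C₁ η on the support
  have hb1 : ∀ x, r x ≠ 0 → |r x| / |x| ≤ (2 * ε ^ (α/2 - 1) + ε⁻¹) * eta α r x := by
    intro x hx
    have hx1 : ε < |x| := hεx x hx
    have hx0 : 0 < |x| := lt_trans hε hx1
    have htnn : 0 ≤ |x|^α := habs x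
    have hid := sqrt_sub_mul_add (|x|^α) htnn
    have hsum : Real.sqrt (|x|^α+1) + Real.sqrt (|x|^α) ≤ (2*ε^(α/2-1) + ε⁻¹) * |x| := by
      have h1 := sqrt_add_one_le (|x|^α) htnn
      have h2 : Real.sqrt (|x|^α) = |x|^(α/2) := by
        rw [Real.sqrt_eq_rpow, ← Real.rpow_mul (abs_nonneg x), mul_one_div]
      have h3 : |x| ^ (α/2 - 1 + 1) = |x| ^ (α/2 - 1) * |x| := by
        rw [Real.rpow_add hx0, Real.rpow_one]
      simp only [show α/2 - 1 + 1 = α/2 by ring] at h3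
      have h4 : |x|^(α/2-1) ≤ ε^(α/2-1) :=
        Real.rpow_le_rpow_of_nonpos hε hx1.le (by linarith)
      have h5 : 1 ≤ ε⁻¹ * |x| := by
        have := (one_le_div hε).mpr hx1.le
        rwa [div_eq_inv_mul] at this
      have h6 : |x|^(α/2-1) * |x| ≤ ε^(α/2-1) * |x| := mul_le_mul_of_nonneg_right h4 hx0.le
      calc Real.sqrt (|x|^α+1) + Real.sqrt (|x|^α) ≤ 2*Real.sqrt (|x|^α) + 1 := by linarith
        _ = 2*(|x|^(α/2-1) * |x|) + 1 := by rw [h2, h3]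
        _ ≤ 2*(ε^(α/2-1) * |x|) + ε⁻¹*|x| := by linarith
        _ = (2*ε^(α/2-1) + ε⁻¹) * |x| := by ring
    have hfpos := hfac_pos x
    rw [div_le_iff₀ hx0]
    have h7 : 1 ≤ (Real.sqrt (|x|^α+1) - Real.sqrt (|x|^α)) * ((2*ε^(α/2-1)+ε⁻¹) * |x|) := by
      calc (1:ℝ) = (Real.sqrt (|x|^α+1) - Real.sqrt (|x|^α))
            * (Real.sqrt (|x|^α+1) + Real.sqrt (|x|^α)) := hid.symm
        _ ≤ _ := mul_le_mul_of_nonneg_left hsum hfpos.le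
    calc |r x| = 1 * |r x| := (one_mul _).symm
      _ ≤ ((Real.sqrt (|x|^α+1) - Real.sqrt (|x|^α)) * ((2*ε^(α/2-1)+ε⁻¹) * |x|)) * |r x| :=
          mul_le_mul_of_nonneg_right h7 (abs_nonneg _)
      _ = (2*ε^(α/2-1)+ε⁻¹) * eta α r x * |x| := by unfold eta; ring
  -- |r|/|x| ≤ C₂ ω on the support
  have hb2 : ∀ x, r x ≠ 0 → |r x| / |x| ≤ (ε ^ (1 + α/2))⁻¹ * omegaW α r x := by
    intro x hx
    have hx1 : ε < |x| := hεx x hx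
    have hx0 : 0 < |x| := lt_trans hε hx1
    have hεp : 0 < ε ^ (1+α/2) := Real.rpow_pos_of_pos hε _
    have key : ε ^ (1 + α/2) ≤ |x| ^ (1 + α/2) :=
      Real.rpow_le_rpow hε.le hx1.le (by linarith)
    have hsplit : |x| ^ (1 + α/2) = |x| * |x| ^ (α/2) := by
      rw [Real.rpow_add hx0, Real.rpow_one]
    have h2 : Real.sqrt (|x|^α) = |x|^(α/2) := by
      rw [Real.sqrt_eq_rpow, ← Real.rpow_mul (abs_nonneg x), mul_one_div]
    have h5 : 1 ≤ (ε^(1+α/2))⁻¹ * |x|^(1+α/2) := by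
      have := (one_le_div hεp).mpr key
      rwa [div_eq_inv_mul] at this
    rw [div_le_iff₀ hx0]
    unfold omegaW
    rw [h2]
    calc |r x| = 1 * |r x| := (one_mul _).symm
      _ ≤ ((ε^(1+α/2))⁻¹ * |x|^(1+α/2)) * |r x| :=
          mul_le_mul_of_nonneg_right h5 (abs_nonneg _)
      _ = (ε^(1+α/2))⁻¹ * (|x|^(α/2) * |r x|) * |x| := by rw [hsplit]; ring
  -- DomT gives f ∈ L²(η)
  have memEta : ∀ f : ℝ → ℂ, Measurable f → MemL2W (eta α r) (evenPart f) →
      MemL2W (omegaW α r) (oddPart f) → MemL2W (eta α r) f := by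
    intro f hf he ho
    have hmaj : Integrable (fun x => 2 * (‖evenPart f x‖^2 * eta α r x)
        + 2 * ((Real.sqrt (ε^α))⁻¹ * (‖oddPart f x‖^2 * omegaW α r x))) :=
      (he.const_mul 2).add ((ho.const_mul _).const_mul 2)
    refine Integrable.mono' hmaj ?_ ?_
    · exact ((hf.norm.pow_const 2).mul hηm).aestronglyMeasurable
    · refine Eventually.of_forall fun x => ?_
      have hfx := sq_norm_le_parts f x
      rw [Real.norm_eq_abs, abs_of_nonneg (mul_nonneg (by positivity) (hηnn x))]
      have hoη : ‖oddPart f x‖^2 * eta α r x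
          ≤ (Real.sqrt (ε^α))⁻¹ * (‖oddPart f x‖^2 * omegaW α r x) := by
        have := mul_le_mul_of_nonneg_left (hC0 x) (by positivity : (0:ℝ) ≤ ‖oddPart f x‖^2)
        calc ‖oddPart f x‖^2 * eta α r x
            ≤ ‖oddPart f x‖^2 * ((Real.sqrt (ε^α))⁻¹ * omegaW α r x) := this
          _ = (Real.sqrt (ε^α))⁻¹ * (‖oddPart f x‖^2 * omegaW α r x) := by ring
      have h8 : ‖f x‖^2 * eta α r x
          ≤ (2*‖evenPart f x‖^2 + 2*‖oddPart f x‖^2) * eta α r x :=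
        mul_le_mul_of_nonneg_right hfx (hηnn x)
      have h9 : (2*‖evenPart f x‖^2 + 2*‖oddPart f x‖^2) * eta α r x
          = 2*(‖evenPart f x‖^2 * eta α r x) + 2*(‖oddPart f x‖^2 * eta α r x) := by ring
      linarith [h8, h9 ▸ h8, hoη]
  -- DomT pieces give f ∈ L²(r₋)
  have memRminus : ∀ f : ℝ → ℂ, Measurable f → MemL2W (eta α r) (evenPart f) →
      MemL2W (omegaW α r) (oddPart f) → MemL2W (rminus r) f := by
    intro f hf he ho
    have hmaj : Integrable (fun x => 2 * ((2*ε^(α/2-1)+ε⁻¹) * (‖evenPart f x‖^2 * eta α r x))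
        + 2 * ((ε^(1+α/2))⁻¹ * (‖oddPart f x‖^2 * omegaW α r x))) :=
      ((he.const_mul _).const_mul 2).add ((ho.const_mul _).const_mul 2)
    refine Integrable.mono' hmaj ?_ ?_
    · refine ((hf.norm.pow_const 2).mul ?_).aestronglyMeasurable
      unfold rminus; exact hrm.div measurable_id
    · refine Eventually.of_forall fun x => ?_
      by_cases hx : r x = 0
      · have : rminus r x = 0 := by unfold rminus; rw [hx]; simp
        rw [this, mul_zero, norm_zero]
        have h1 : (0:ℝ) ≤ 2*ε^(α/2-1)+ε⁻¹ := by positivity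
        have h2 : (0:ℝ) ≤ (ε^(1+α/2))⁻¹ := by positivity
        have h3 := mul_nonneg (by positivity : (0:ℝ) ≤ ‖evenPart f x‖^2) (hηnn x)
        have h4 := mul_nonneg (by positivity : (0:ℝ) ≤ ‖oddPart f x‖^2) (hωnn x)
        positivity
      · have hx0 : 0 < |x| := lt_trans hε (hεx x hx)
        have hrabs : |rminus r x| = |r x| / |x| := by
          unfold rminus; rw [abs_div]
        have hfx := sq_norm_le_parts f x
        have step1 : ‖‖f x‖^2 * rminus r x‖ ≤ ‖f x‖^2 * (|r x| / |x|) := by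
          rw [Real.norm_eq_abs, abs_mul, abs_of_nonneg (by positivity : (0:ℝ) ≤ ‖f x‖^2), hrabs]
        have hq : (0:ℝ) ≤ |r x| / |x| := div_nonneg (abs_nonneg _) hx0.le
        have step2 : ‖f x‖^2 * (|r x| / |x|)
            ≤ (2*‖evenPart f x‖^2 + 2*‖oddPart f x‖^2) * (|r x| / |x|) :=
          mul_le_mul_of_nonneg_right hfx hq
        have he1 : ‖evenPart f x‖^2 * (|r x| / |x|)
            ≤ (2*ε^(α/2-1)+ε⁻¹) * (‖evenPart f x‖^2 * eta α r x) := by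
          have := mul_le_mul_of_nonneg_left (hb1 x hx)
            (by positivity : (0:ℝ) ≤ ‖evenPart f x‖^2)
          calc ‖evenPart f x‖^2 * (|r x| / |x|)
              ≤ ‖evenPart f x‖^2 * ((2*ε^(α/2-1)+ε⁻¹) * eta α r x) := this
            _ = (2*ε^(α/2-1)+ε⁻¹) * (‖evenPart f x‖^2 * eta α r x) := by ring
        have ho1 : ‖oddPart f x‖^2 * (|r x| / |x|)
            ≤ (ε^(1+α/2))⁻¹ * (‖oddPart f x‖^2 * omegaW α r x) := by
          have := mul_le_mul_of_nonneg_left (hb2 x hx)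
            (by positivity : (0:ℝ) ≤ ‖oddPart f x‖^2)
          calc ‖oddPart f x‖^2 * (|r x| / |x|)
              ≤ ‖oddPart f x‖^2 * ((ε^(1+α/2))⁻¹ * omegaW α r x) := this
            _ = (ε^(1+α/2))⁻¹ * (‖oddPart f x‖^2 * omegaW α r x) := by ring
        calc ‖‖f x‖^2 * rminus r x‖ ≤ ‖f x‖^2 * (|r x| / |x|) := step1
          _ ≤ (2*‖evenPart f x‖^2 + 2*‖oddPart f x‖^2) * (|r x| / |x|) := step2
          _ = 2*(‖evenPart f x‖^2 * (|r x| / |x|)) + 2*(‖oddPart f x‖^2 * (|r x| / |x|)) := by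
              ring
          _ ≤ 2 * ((2*ε^(α/2-1)+ε⁻¹) * (‖evenPart f x‖^2 * eta α r x))
              + 2 * ((ε^(1+α/2))⁻¹ * (‖oddPart f x‖^2 * omegaW α r x)) := by linarith
  refine ⟨?_, ?_, ?_, ?_⟩
  · -- hermitian symmetry
    intro f g hf hg hdf hdg
    have A : ∀ (u v : ℝ → ℂ) (w : ℝ → ℝ),
        (starRingEnd ℂ) (∫ x, u x * (starRingEnd ℂ) (v x) * ((w x : ℝ) : ℂ))
          = ∫ x, v x * (starRingEnd ℂ) (u x) * ((w x : ℝ) : ℂ) := by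
      intro u v w
      rw [← integral_conj]
      congr 1
      funext x
      simp only [map_mul, Complex.conj_conj, Complex.conj_ofReal]
      ring
    unfold tForm
    rw [map_add, map_mul, A, A, map_ofNat]
  · -- value on the diagonal and nonnegativity
    intro f hf hdf
    constructor
    · unfold tForm Qform
      have key : ∀ (u : ℝ → ℂ) (w : ℝ → ℝ),
          (∫ x, u x * (starRingEnd ℂ) (u x) * ((w x : ℝ) : ℂ))
            = (((∫ x, ‖u x‖^2 * w x : ℝ)) : ℂ) := by
        intro u w
        have h1 : (fun x => u x * (starRingEnd ℂ) (u x) * ((w x : ℝ) : ℂ))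
            = fun x => (((‖u x‖^2 * w x : ℝ)) : ℂ) := by
          funext x
          rw [Complex.mul_conj']
          push_cast
          ring
        rw [h1]
        exact integral_ofReal (𝕜 := ℂ)
      rw [key, key]
      push_cast
      ring
    · have h1 : (0:ℝ) ≤ ∫ x, ‖oddPart f x‖^2 * omegaW α r x :=
        integral_nonneg fun x => mul_nonneg (by positivity) (hωnn x)
      have h2 : (0:ℝ) ≤ ∫ x, ‖f x‖^2 * eta α r x :=
        integral_nonneg fun x => mul_nonneg (by positivity) (hηnn x)
      unfold Qform
      linarith
  · -- definiteness
    intro f hf hdf hQ0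
    obtain ⟨hdm, hde, hdo⟩ := hdf
    have hint : Integrable (fun x => ‖f x‖^2 * eta α r x) := memEta f hf hde hdo
    have h1 : (0:ℝ) ≤ ∫ x, ‖oddPart f x‖^2 * omegaW α r x :=
      integral_nonneg fun x => mul_nonneg (by positivity) (hωnn x)
    have h2 : (0:ℝ) ≤ ∫ x, ‖f x‖^2 * eta α r x :=
      integral_nonneg fun x => mul_nonneg (by positivity) (hηnn x)
    have hB : (∫ x, ‖f x‖^2 * eta α r x) = 0 := by
      unfold Qform at hQ0; linarith
    have hae := (integral_eq_zero_iff_of_nonneg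
      (fun x => mul_nonneg (by positivity) (hηnn x)) hint).mp hB
    filter_upwards [hae] with x hx hr
    have hxp := hηpos x hr
    have : ‖f x‖^2 * eta α r x = 0 := hx
    have h3 : ‖f x‖^2 = 0 := by
      rcases mul_eq_zero.mp this with h | h
      · exact h
      · exact absurd h (ne_of_gt hxp)
    simpa using (pow_eq_zero_iff (two_ne_zero)).mp h3
  · -- completeness
    intro F hF hcau
    classical
    have hFm : ∀ n, Measurable (F n) := fun n => (hF n).1
    have hFd : ∀ n, DomT α r (F n) := fun n => (hF n).2
    have hoddm : ∀ n, Measurable (oddPart (F n)) := fun n => by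
      unfold oddPart
      exact ((hFm n).sub ((hFm n).comp measurable_neg)).div_const 2
    have hsηm : Measurable (fun x => ((Real.sqrt (eta α r x) : ℝ) : ℂ)) :=
      Complex.measurable_ofReal.comp hηm.sqrt
    have hsωm : Measurable (fun x => ((Real.sqrt (omegaW α r x) : ℝ) : ℂ)) :=
      Complex.measurable_ofReal.comp hωm.sqrt
    have hHmeas : ∀ n, Measurable (fun x => F n x * ((Real.sqrt (eta α r x) : ℝ) : ℂ)) :=
      fun n => (hFm n).mul hsηm
    have hGmeas : ∀ n,
        Measurable (fun x => oddPart (F n) x * ((Real.sqrt (omegaW α r x) : ℝ) : ℂ)) :=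
      fun n => (hoddm n).mul hsωm
    have hHL : ∀ n, MemLp (fun x => F n x * ((Real.sqrt (eta α r x) : ℝ) : ℂ)) 2 volume := by
      intro n
      have hmem : MemL2W (eta α r) (F n) := memEta (F n) (hFm n) (hFd n).2.1 (hFd n).2.2
      rw [memLp_two_iff_integrable_sq_norm ((hHmeas n).aestronglyMeasurable)]
      have h1 : (fun x => ‖F n x * ((Real.sqrt (eta α r x) : ℝ) : ℂ)‖^2)
          = fun x => ‖F n x‖^2 * eta α r x := funext fun x => norm_mul_sqrt_sq _ _ (hηnn x)
      rw [h1]; exact hmem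
    have hGL : ∀ n,
        MemLp (fun x => oddPart (F n) x * ((Real.sqrt (omegaW α r x) : ℝ) : ℂ)) 2 volume := by
      intro n
      rw [memLp_two_iff_integrable_sq_norm ((hGmeas n).aestronglyMeasurable)]
      have h1 : (fun x => ‖oddPart (F n) x * ((Real.sqrt (omegaW α r x) : ℝ) : ℂ)‖^2)
          = fun x => ‖oddPart (F n) x‖^2 * omegaW α r x :=
        funext fun x => norm_mul_sqrt_sq _ _ (hωnn x)
      rw [h1]; exact (hFd n).2.2
    set uH : ℕ → Lp ℂ 2 (volume : Measure ℝ) := fun n => (hHL n).toLp _ with huH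
    set uG : ℕ → Lp ℂ 2 (volume : Measure ℝ) := fun n => (hGL n).toLp _ with huG
    have normsub : ∀ (v w : Lp ℂ 2 (volume : Measure ℝ)) (φ ψ : ℝ → ℂ),
        ((v : ℝ → ℂ) =ᵐ[volume] φ) → ((w : ℝ → ℂ) =ᵐ[volume] ψ) →
        ‖v - w‖^2 = ∫ x, ‖φ x - ψ x‖^2 := by
      intro v w φ ψ hv hw
      rw [lp2_norm_sq]
      refine integral_congr_ae ?_
      filter_upwards [Lp.coeFn_sub v w, hv, hw] with x h1 h2 h3
      rw [h1, Pi.sub_apply, h2, h3]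
    have hHsub : ∀ m n : ℕ, ‖uH m - uH n‖^2 = ∫ x, ‖F m x - F n x‖^2 * eta α r x := by
      intro m n
      rw [normsub _ _ _ _ ((hHL m).coeFn_toLp) ((hHL n).coeFn_toLp)]
      refine integral_congr_ae (Eventually.of_forall fun x => ?_)
      dsimp only
      rw [← sub_mul, norm_mul_sqrt_sq _ _ (hηnn x)]
    have hGsub : ∀ m n : ℕ, ‖uG m - uG n‖^2
        = ∫ x, ‖oddPart (fun y => F m y - F n y) x‖^2 * omegaW α r x := by
      intro m n
      rw [normsub _ _ _ _ ((hGL m).coeFn_toLp) ((hGL n).coeFn_toLp)]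
      refine integral_congr_ae (Eventually.of_forall fun x => ?_)
      dsimp only
      have h2 : oddPart (F m) x - oddPart (F n) x = oddPart (fun y => F m y - F n y) x := by
        unfold oddPart; ring
      rw [← sub_mul, h2, norm_mul_sqrt_sq _ _ (hωnn x)]
    have hQsplit : ∀ m n : ℕ, Qform α r (fun x => F m x - F n x)
        = 2 * ‖uG m - uG n‖^2 + ‖uH m - uH n‖^2 := by
      intro m n
      rw [hGsub, hHsub]
      simp only [Qform]
    have hcauH : CauchySeq uH := by
      refine Metric.cauchySeq_iff.mpr fun δ hδ => ?_
      obtain ⟨N, hN⟩ := hcau (δ^2) (by positivity)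
      refine ⟨N, fun m hm n hn => ?_⟩
      have h1 := hN m hm n hn
      rw [hQsplit m n] at h1
      have h3 : (0:ℝ) ≤ ‖uG m - uG n‖^2 := by positivity
      have h2 : ‖uH m - uH n‖^2 < δ^2 := by linarith
      rw [dist_eq_norm]
      exact lt_of_pow_lt_pow_left₀ 2 hδ.le h2
    have hcauG : CauchySeq uG := by
      refine Metric.cauchySeq_iff.mpr fun δ hδ => ?_
      obtain ⟨N, hN⟩ := hcau (δ^2) (by positivity)
      refine ⟨N, fun m hm n hn => ?_⟩
      have h1 := hN m hm n hn
      rw [hQsplit m n] at h1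
      have h3 : (0:ℝ) ≤ ‖uH m - uH n‖^2 := by positivity
      have h4 : (0:ℝ) ≤ ‖uG m - uG n‖^2 := by positivity
      have h2 : ‖uG m - uG n‖^2 < δ^2 := by linarith
      rw [dist_eq_norm]
      exact lt_of_pow_lt_pow_left₀ 2 hδ.le h2
    obtain ⟨vH, hvH⟩ := cauchySeq_tendsto_of_complete hcauH
    obtain ⟨vG, hvG⟩ := cauchySeq_tendsto_of_complete hcauG
    have hvHm : Measurable (vH : ℝ → ℂ) := (Lp.stronglyMeasurable vH).measurable
    have hvGm : Measurable (vG : ℝ → ℂ) := (Lp.stronglyMeasurable vG).measurable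
    have hneg : MeasurePreserving (fun x : ℝ => -x) volume volume :=
      Measure.measurePreserving_neg _
    -- a.e. convergent subsequence
    have hHim : TendstoInMeasure volume (fun n => ((uH n : ℝ → ℂ))) atTop (vH : ℝ → ℂ) :=
      tendstoInMeasure_of_tendsto_Lp hvH
    have hGim : TendstoInMeasure volume (fun n => ((uG n : ℝ → ℂ))) atTop (vG : ℝ → ℂ) :=
      tendstoInMeasure_of_tendsto_Lp hvG
    obtain ⟨ns, hns, hnsae⟩ := hHim.exists_seq_tendsto_ae
    have hGim' : TendstoInMeasure volume (fun i => ((uG (ns i) : ℝ → ℂ))) atTop (vG : ℝ → ℂ) :=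
      fun δ hδ => (hGim δ hδ).comp hns.tendsto_atTop
    obtain ⟨ms, hms, hmsae⟩ := hGim'.exists_seq_tendsto_ae
    have hcoe : ∀ᵐ x ∂(volume : Measure ℝ), ∀ n : ℕ,
        (uH n : ℝ → ℂ) x = F n x * ((Real.sqrt (eta α r x) : ℝ) : ℂ)
        ∧ (uG n : ℝ → ℂ) x = oddPart (F n) x * ((Real.sqrt (omegaW α r x) : ℝ) : ℂ) := by
      rw [ae_all_iff]
      intro n
      filter_upwards [(hHL n).coeFn_toLp, (hGL n).coeFn_toLp] with x h1 h2
      exact ⟨h1, h2⟩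
    have haeH : ∀ᵐ x ∂(volume : Measure ℝ),
        Tendsto (fun j => F (ns (ms j)) x * ((Real.sqrt (eta α r x) : ℝ) : ℂ)) atTop
          (nhds (vH x)) := by
      filter_upwards [hnsae, hcoe] with x hx hc
      refine ((hx.comp hms.tendsto_atTop).congr fun j => ?_)
      exact (hc (ns (ms j))).1
    have haeG : ∀ᵐ x ∂(volume : Measure ℝ),
        Tendsto (fun j => oddPart (F (ns (ms j))) x * ((Real.sqrt (omegaW α r x) : ℝ) : ℂ)) atTop
          (nhds (vG x)) := by
      filter_upwards [hmsae, hcoe] with x hx hc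
      refine (hx.congr fun j => ?_)
      exact (hc (ns (ms j))).2
    have haeHneg : ∀ᵐ x ∂(volume : Measure ℝ),
        Tendsto (fun j => F (ns (ms j)) (-x) * ((Real.sqrt (eta α r (-x)) : ℝ) : ℂ)) atTop
          (nhds (vH (-x))) :=
      hneg.quasiMeasurePreserving.ae haeH
    -- the limit function
    set f : ℝ → ℂ := fun x => if r x = 0 then 0
        else vH x / ((Real.sqrt (eta α r x) : ℝ) : ℂ) with hfdef
    have hfm : Measurable f := by
      refine Measurable.ite (hrm (measurableSet_singleton 0)) measurable_const ?_
      exact hvHm.div hsηm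
    have hsηne : ∀ x, r x ≠ 0 → ((Real.sqrt (eta α r x) : ℝ) : ℂ) ≠ 0 := fun x hx => by
      simp only [ne_eq, Complex.ofReal_eq_zero]
      exact ne_of_gt (Real.sqrt_pos.mpr (hηpos x hx))
    have hf_eq : ∀ x, r x ≠ 0 → f x * ((Real.sqrt (eta α r x) : ℝ) : ℂ) = vH x := fun x hx => by
      rw [hfdef]
      simp only [if_neg hx]
      exact div_mul_cancel₀ _ (hsηne x hx)
    have hrneg : ∀ x : ℝ, r (-x) = 0 ↔ r x = 0 := fun x => by
      rw [hrodd]; simp [neg_eq_zero]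
    have h_heq : ((vH : ℝ → ℂ)) =ᵐ[volume]
        fun x => f x * ((Real.sqrt (eta α r x) : ℝ) : ℂ) := by
      filter_upwards [haeH] with x hx
      by_cases hrx : r x = 0
      · have hz : ((Real.sqrt (eta α r x) : ℝ) : ℂ) = 0 := by
          rw [(hη0 x).mpr hrx]; simp
        simp only [hz, mul_zero] at hx ⊢
        exact tendsto_nhds_unique hx tendsto_const_nhds
      · exact (hf_eq x hrx).symm
    have h_geq : ((vG : ℝ → ℂ)) =ᵐ[volume]
        fun x => oddPart f x * ((Real.sqrt (omegaW α r x) : ℝ) : ℂ) := by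
      filter_upwards [haeH, haeHneg, haeG] with x hxH hxHn hxG
      by_cases hrx : r x = 0
      · have hz : ((Real.sqrt (omegaW α r x) : ℝ) : ℂ) = 0 := by
          unfold omegaW; rw [hrx]; simp
        simp only [hz, mul_zero] at hxG ⊢
        exact tendsto_nhds_unique hxG tendsto_const_nhds
      · have hrnx : r (-x) ≠ 0 := fun h => hrx ((hrneg x).mp h)
        have hsη := hsηne x hrx
        have hodd_eq : ∀ j : ℕ, oddPart (F (ns (ms j))) x
            = (F (ns (ms j)) x * ((Real.sqrt (eta α r x) : ℝ) : ℂ)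
               - F (ns (ms j)) (-x) * ((Real.sqrt (eta α r (-x)) : ℝ) : ℂ))
              / (2 * ((Real.sqrt (eta α r x) : ℝ) : ℂ)) := fun j => by
          rw [hηeven x]
          unfold oddPart
          field_simp
        have hlim1 : Tendsto (fun j => oddPart (F (ns (ms j))) x) atTop
            (nhds ((vH x - vH (-x)) / (2 * ((Real.sqrt (eta α r x) : ℝ) : ℂ)))) := by
          simp only [hodd_eq]
          exact (hxH.sub hxHn).div_const _
        have hlim2 : Tendsto
            (fun j => oddPart (F (ns (ms j))) x * ((Real.sqrt (omegaW α r x) : ℝ) : ℂ)) atTop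
            (nhds ((vH x - vH (-x)) / (2 * ((Real.sqrt (eta α r x) : ℝ) : ℂ))
              * ((Real.sqrt (omegaW α r x) : ℝ) : ℂ))) :=
          hlim1.mul_const _
        have hvGx := tendsto_nhds_unique hxG hlim2
        have hfx : f x = vH x / ((Real.sqrt (eta α r x) : ℝ) : ℂ) := by
          rw [hfdef]; simp only [if_neg hrx]
        have hfnx : f (-x) = vH (-x) / ((Real.sqrt (eta α r x) : ℝ) : ℂ) := by
          rw [hfdef]; simp only [if_neg hrnx]; rw [hηeven x]
        have hop : oddPart f x
            = (vH x - vH (-x)) / (2 * ((Real.sqrt (eta α r x) : ℝ) : ℂ)) := by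
          unfold oddPart
          rw [hfx, hfnx, div_sub_div_same, div_div, mul_comm]
        rw [hvGx, hop]
    -- membership of the limit in the domain
    have hvHL : MemLp ((vH : ℝ → ℂ)) 2 volume := Lp.memLp vH
    have hvHnegL : MemLp (fun x : ℝ => vH (-x)) 2 volume :=
      hvHL.comp_measurePreserving hneg
    have hvHeL : MemLp (evenPart ((vH : ℝ → ℂ))) 2 volume := by
      have h1 : evenPart ((vH : ℝ → ℂ)) = fun x => (2⁻¹ : ℂ) * (vH x + vH (-x)) := by
        funext x; unfold evenPart; ring
      rw [h1]
      exact (hvHL.add hvHnegL).const_mul _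
    have hde : MemL2W (eta α r) (evenPart f) := by
      have hint : Integrable (fun x => ‖evenPart ((vH : ℝ → ℂ)) x‖^2) :=
        (memLp_two_iff_integrable_sq_norm hvHeL.aestronglyMeasurable).mp hvHeL
      refine hint.congr ?_
      filter_upwards [h_heq, hneg.quasiMeasurePreserving.ae h_heq] with x h1 h2
      have h3 : evenPart ((vH : ℝ → ℂ)) x = evenPart f x * ((Real.sqrt (eta α r x) : ℝ) : ℂ) := by
        unfold evenPart
        rw [h1, h2, hηeven x]
        ring
      rw [h3, norm_mul_sqrt_sq _ _ (hηnn x)]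
    have hdo : MemL2W (omegaW α r) (oddPart f) := by
      have hvGL : MemLp ((vG : ℝ → ℂ)) 2 volume := Lp.memLp vG
      have hint : Integrable (fun x => ‖vG x‖^2) :=
        (memLp_two_iff_integrable_sq_norm hvGL.aestronglyMeasurable).mp hvGL
      refine hint.congr ?_
      filter_upwards [h_geq] with x h1
      rw [h1, norm_mul_sqrt_sq _ _ (hωnn x)]
    have hdm : MemL2W (rminus r) f := memRminus f hfm hde hdo
    -- convergence in the form norm
    have hHc : ∀ n, (∫ x, ‖F n x - f x‖^2 * eta α r x) = ‖uH n - vH‖^2 := by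
      intro n
      rw [normsub (uH n) vH _ _ ((hHL n).coeFn_toLp) (EventuallyEq.refl _ _)]
      refine integral_congr_ae ?_
      filter_upwards [h_heq] with x h1
      rw [← norm_mul_sqrt_sq (F n x - f x) _ (hηnn x), sub_mul, ← h1]
    have hGc : ∀ n, (∫ x, ‖oddPart (fun y => F n y - f y) x‖^2 * omegaW α r x)
        = ‖uG n - vG‖^2 := by
      intro n
      rw [normsub (uG n) vG _ _ ((hGL n).coeFn_toLp) (EventuallyEq.refl _ _)]
      refine integral_congr_ae ?_
      filter_upwards [h_geq] with x h1
      have h2 : oddPart (fun y => F n y - f y) x = oddPart (F n) x - oddPart f x := by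
        unfold oddPart; ring
      rw [h2, ← norm_mul_sqrt_sq _ _ (hωnn x), sub_mul, ← h1]
    have hQc : ∀ n, Qform α r (fun x => F n x - f x)
        = 2 * ‖uG n - vG‖^2 + ‖uH n - vH‖^2 := by
      intro n
      rw [← hGc n, ← hHc n]
      simp only [Qform]
    refine ⟨f, hfm, ⟨hdm, hde, hdo⟩, ?_⟩
    have hHconv : Tendsto (fun n => ‖uH n - vH‖^2) atTop (nhds 0) := by
      have h1 : Tendsto (fun n => ‖uH n - vH‖) atTop (nhds 0) := by
        have h2 := tendsto_iff_dist_tendsto_zero.mp hvH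
        refine h2.congr fun n => ?_
        rw [dist_eq_norm]
      have h3 := h1.pow 2
      norm_num at h3
      exact h3
    have hGconv : Tendsto (fun n => ‖uG n - vG‖^2) atTop (nhds 0) := by
      have h1 : Tendsto (fun n => ‖uG n - vG‖) atTop (nhds 0) := by
        have h2 := tendsto_iff_dist_tendsto_zero.mp hvG
        refine h2.congr fun n => ?_
        rw [dist_eq_norm]
      have h3 := h1.pow 2
      norm_num at h3
      exact h3
    have hsum := (hGconv.const_mul 2).add hHconv
    simp only [mul_zero, add_zero] at hsum
    exact (Filter.tendsto_congr fun n => hQc n).mpr hsum
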